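/- Let A be a unital ℂ-algebra equipped with a conjugate-linear anti-multiplicative involution x ↦ x*, let q be a nonzero real number, and let α, γ ∈ A satisfy α*α + γ*γ = 1, αα* + q^2 γ*γ = 1, γ*γ = γγ*, αγ = qγα, and αγ* = qγ*α. Then for every k ≥ 0, writing t = γ*γ, one has q^{−1}(α t^k α* + q^2 γ* t^k γ) + q(γ t^k γ* + α* t^k α) = q^{−1}(q^2)^k t^k (1 − q^2 t) + 2q·t^{k+1} + q·q^{−2k} t^k (1 − t). (This computes the Markov operator A_ω on the subalgebra generated by γ*γ: it acts on functions h of t by (A_ω h)(t) = (1/(q+q^{−1}))(q^{−1}((1−q^2 t)h(q^2 t) + q^2 t·h(t)) + q(t·h(t) + (1−t)h(q^{−2}t))).) -/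

import Mathlib

/-- Let `A` be a unital `ℂ`-algebra with a conjugate-linear
anti-multiplicative involution `x ↦ x*`, let `q` be a nonzero real number, and let
`α, γ ∈ A` satisfy the defining relations of `C(SU_q(2))`. Then for every `k ≥ 0`,
writing `t = γ*γ`, one has
`q⁻¹(α t^k α* + q² γ* t^k γ) + q(γ t^k γ* + α* t^k α)`
`  = q⁻¹(q²)^k t^k (1 - q² t) + 2q·t^{k+1} + q·q^{-2k} t^k (1 - t)`.
(This computes the Markov operator `A_ω` on the subalgebra generated by `γ*γ`.) -/
theorem stmt16 {A : Type*} [Ring A] [Algebra ℂ A] [StarRing A] [StarModule ℂ A]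
    (q : ℝ) (hq : q ≠ 0) (α γ : A)
    (h1 : star α * α + star γ * γ = 1)
    (h2 : α * star α + (q : ℂ) ^ 2 • (star γ * γ) = 1)
    (h3 : star γ * γ = γ * star γ)
    (h4 : α * γ = (q : ℂ) • (γ * α))
    (h5 : α * star γ = (q : ℂ) • (star γ * α)) :
    ∀ k : ℕ,
      (q : ℂ)⁻¹ • (α * (star γ * γ) ^ k * star α
            + (q : ℂ) ^ 2 • (star γ * (star γ * γ) ^ k * γ))
        + (q : ℂ) • (γ * (star γ * γ) ^ k * star γ
            + star α * (star γ * γ) ^ k * α)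
      = ((q : ℂ)⁻¹ * ((q : ℂ) ^ 2) ^ k)
            • ((star γ * γ) ^ k * (1 - (q : ℂ) ^ 2 • (star γ * γ)))
        + (2 * (q : ℂ)) • (star γ * γ) ^ (k + 1)
        + ((q : ℂ) * ((q : ℂ) ^ (2 * k))⁻¹)
            • ((star γ * γ) ^ k * (1 - star γ * γ)) := by
  intro k
  set t : A := star γ * γ with ht
  have hq2 : ((q : ℂ) ^ 2) ≠ 0 := pow_ne_zero 2 (by exact_mod_cast hq)
  -- γ commutes with t
  have hγt : γ * t = t * γ := by
    rw [ht, ← mul_assoc, ← h3]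
  have hγtk : γ * t ^ k = t ^ k * γ := Commute.pow_right hγt k
  -- star γ commutes with t
  have hsγt : star γ * t = t * star γ := by
    rw [ht, mul_assoc, ← h3]
  have hsγtk : star γ * t ^ k = t ^ k * star γ := Commute.pow_right hsγt k
  -- α t = q² t α
  have hαt : α * t = (q : ℂ) ^ 2 • (t * α) := by
    rw [ht, ← mul_assoc, h5, smul_mul_assoc, mul_assoc, h4, mul_smul_comm, smul_smul,
      ← mul_assoc, sq]
  have hαtk : ∀ m, α * t ^ m = ((q : ℂ) ^ 2) ^ m • (t ^ m * α) := by
    intro m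
    induction m with
    | zero => simp
    | succ n ih =>
      rw [pow_succ, ← mul_assoc, ih, smul_mul_assoc, mul_assoc, hαt, mul_smul_comm,
        smul_smul, ← mul_assoc, ← pow_succ]
  -- star α t = q⁻² t star α
  have htsα : t * star α = (q : ℂ) ^ 2 • (star α * t) := by
    have := congrArg star hαt
    simpa [star_smul, mul_comm, Complex.star_def, Complex.conj_ofReal, ht, ← h3] using this
  have hsαt : star α * t = (((q : ℂ) ^ 2)⁻¹) • (t * star α) := by
    rw [htsα, smul_smul, inv_mul_cancel₀ hq2, one_smul]
  have hsαtk : ∀ m, star α * t ^ m = (((q : ℂ) ^ 2)⁻¹) ^ m • (t ^ m * star α) := by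
    intro m
    induction m with
    | zero => simp
    | succ n ih =>
      rw [pow_succ, ← mul_assoc, ih, smul_mul_assoc, mul_assoc, hsαt, mul_smul_comm,
        smul_smul, ← mul_assoc, ← pow_succ]
  have hααs : α * star α = 1 - (q : ℂ) ^ 2 • t := by
    rw [eq_sub_iff_add_eq]; exact h2
  have hsαα : star α * α = 1 - t := by
    rw [eq_sub_iff_add_eq]; exact h1
  -- the four terms
  have T1 : α * t ^ k * star α = ((q : ℂ) ^ 2) ^ k • (t ^ k * (1 - (q : ℂ) ^ 2 • t)) := by
    rw [hαtk k, smul_mul_assoc, mul_assoc, hααs]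
  have T2 : star γ * t ^ k * γ = t ^ (k + 1) := by
    rw [hsγtk, mul_assoc, ← ht, ← pow_succ]
  have T3 : γ * t ^ k * star γ = t ^ (k + 1) := by
    rw [hγtk, mul_assoc, ← h3, ← pow_succ]
  have T4 : star α * t ^ k * α = (((q : ℂ) ^ 2)⁻¹) ^ k • (t ^ k * (1 - t)) := by
    rw [hsαtk k, smul_mul_assoc, mul_assoc, hsαα]
  rw [T1, T2, T3, T4]
  have hqc : (q : ℂ) ≠ 0 := by exact_mod_cast hq
  match_scalars
  · field_simp
  · field_simp; ring
  · rw [pow_mul]; field_simp; rw [one_div, ← mul_pow, inv_mul_cancel₀ hq2, one_pow]
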